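/- Let W be a conference matrix of order n ≥ 2 such that n−1 is not a perfect square, and let k be an odd positive integer with k² ≤ n−1 < (k+2)². Then E(W) ≤ n(k² + 2k + n − 1)/(2(k+1)) (an inequality of rational numbers), with equality if and only if every entry of W·1_n lies in {k, k+2}. -/

import Mathlib

private lemma stmt14_sum_sq (n : ℕ) (hn : 2 ≤ n) (W : Matrix (Fin n) (Fin n) ℤ)
    (horth : W * W.transpose = ((n : ℤ) - 1) • 1) :
    ∑ i, (∑ j, W i j) ^ 2 = n * ((n : ℤ) - 1) := by
  set A : Matrix (Fin n) (Fin n) ℚ := W.map (Int.cast) with hAdef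
  have hc : ((n : ℚ) - 1) ≠ 0 := by
    have : (2 : ℚ) ≤ (n : ℚ) := by exact_mod_cast hn
    linarith
  have hA : A * A.transpose = ((n : ℚ) - 1) • 1 := by
    ext i j
    have h := congrFun (congrFun horth i) j
    rcases eq_or_ne i j with rfl | hij
    · simp [Matrix.mul_apply, Matrix.smul_apply, Matrix.one_apply] at h
      simp [hAdef, Matrix.mul_apply, Matrix.smul_apply, Matrix.one_apply]
      exact_mod_cast h
    · simp [Matrix.mul_apply, Matrix.smul_apply, Matrix.one_apply, hij] at h
      simp [hAdef, Matrix.mul_apply, Matrix.smul_apply, Matrix.one_apply, hij]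
      exact_mod_cast h
  have h1 : A * (((n : ℚ) - 1)⁻¹ • A.transpose) = 1 := by
    rw [Matrix.mul_smul, hA, smul_smul, inv_mul_cancel₀ hc, one_smul]
  have h2 : (((n : ℚ) - 1)⁻¹ • A.transpose) * A = 1 := mul_eq_one_comm.mp h1
  have hAtA : A.transpose * A = ((n : ℚ) - 1) • 1 := by
    have := congrArg (fun M => ((n : ℚ) - 1) • M) h2
    simp only [Matrix.smul_mul, smul_smul, mul_inv_cancel₀ hc, one_smul, smul_eq_mul] at this
    simpa using this
  have key : ∑ i, (∑ j, A i j) ^ 2 = (n : ℚ) * ((n : ℚ) - 1) := by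
    have e1 : ∀ i : Fin n, (∑ j, A i j) ^ 2 = ∑ j, ∑ m, A i j * A i m := by
      intro i; rw [sq, Finset.sum_mul_sum]
    rw [Finset.sum_congr rfl fun i _ => e1 i]
    rw [Finset.sum_comm]
    have e2 : ∀ j : Fin n, ∑ i, ∑ m, A i j * A i m = ∑ m, ∑ i, A i j * A i m :=
      fun j => Finset.sum_comm
    rw [Finset.sum_congr rfl fun j _ => e2 j]
    have e3 : ∀ j m : Fin n, ∑ i, A i j * A i m = (A.transpose * A) j m := by
      intro j m; simp [Matrix.mul_apply, Matrix.transpose_apply]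
    calc ∑ j, ∑ m, ∑ i, A i j * A i m
        = ∑ j, ∑ m, (A.transpose * A) j m := by
          refine Finset.sum_congr rfl fun j _ => Finset.sum_congr rfl fun m _ => e3 j m
      _ = ∑ j : Fin n, ((n:ℚ) - 1) := by
          rw [hAtA]
          refine Finset.sum_congr rfl fun j _ => ?_
          simp [Matrix.smul_apply, Matrix.one_apply]
      _ = (n : ℚ) * ((n:ℚ) - 1) := by simp [Finset.sum_const, mul_comm]; ring
  have cast_eq : ((∑ i, (∑ j, W i j) ^ 2 : ℤ) : ℚ) = ∑ i, (∑ j, A i j) ^ 2 := by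
    push_cast [hAdef, Matrix.map_apply]
    rfl
  have : ((∑ i, (∑ j, W i j) ^ 2 : ℤ) : ℚ) = (n : ℚ) * ((n:ℚ) - 1) := cast_eq.trans key
  exact_mod_cast this

private lemma stmt14_odd (n : ℕ) (hn : 2 ≤ n)
    (W : Matrix (Fin n) (Fin n) ℤ)
    (hdiag : ∀ i, W i i = 0)
    (hoff : ∀ i j, i ≠ j → W i j = 1 ∨ W i j = -1)
    (horth : W * W.transpose = ((n : ℤ) - 1) • 1) :
    ∀ i, Odd (∑ j, W i j) := by
  set i0 : Fin n := ⟨0, by omega⟩ with hi0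
  set i1 : Fin n := ⟨1, by omega⟩ with hi1
  have h01 : i0 ≠ i1 := by simp [hi0, hi1, Fin.ext_iff]
  have hrow : ∑ m, W i0 m * W i1 m = 0 := by
    have h := congrFun (congrFun horth i0) i1
    simpa [Matrix.mul_apply, Matrix.smul_apply, Matrix.one_apply, h01] using h
  have hterm : ∀ m : Fin n, ((W i0 m * W i1 m : ℤ) : ZMod 2)
      = if m ∈ ({i0, i1} : Finset (Fin n)) then 0 else 1 := by
    intro m
    by_cases h0 : m = i0
    · subst h0; simp [hdiag]
    · by_cases h1 : m = i1
      · subst h1; simp [hdiag]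
      · simp only [Finset.mem_insert, Finset.mem_singleton, h0, h1, or_self, if_false]
        rcases hoff i0 m (Ne.symm h0) with h | h <;>
        rcases hoff i1 m (Ne.symm h1) with h' | h' <;>
          rw [h, h'] <;> decide
  have hcard : (({i0, i1} : Finset (Fin n))ᶜ).card = n - 2 := by
    rw [Finset.card_compl, Finset.card_insert_of_notMem (by simpa using h01),
      Finset.card_singleton]
    simp
  have hz : ((0 : ℤ) : ZMod 2) = ((n - 2 : ℕ) : ZMod 2) := by
    calc ((0 : ℤ) : ZMod 2) = ((∑ m, W i0 m * W i1 m : ℤ) : ZMod 2) := by rw [hrow]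
      _ = ∑ m, ((W i0 m * W i1 m : ℤ) : ZMod 2) := by push_cast; ring
      _ = ∑ m, (if m ∈ ({i0, i1} : Finset (Fin n)) then (0 : ZMod 2) else 1) :=
          Finset.sum_congr rfl fun m _ => hterm m
      _ = ((n - 2 : ℕ) : ZMod 2) := by
          have hfe : Finset.univ.filter (fun m => m ∉ ({i0, i1} : Finset (Fin n)))
              = ({i0, i1} : Finset (Fin n))ᶜ := by ext m; simp
          rw [Finset.sum_ite, Finset.sum_const, Finset.sum_const, smul_zero, zero_add,
            hfe, hcard, nsmul_eq_mul, mul_one]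
  have hneven : Even n := by
    have : (2 : ℕ) ∣ (n - 2) := by
      have := hz.symm
      rw [Int.cast_zero] at this
      exact (ZMod.natCast_eq_zero_iff _ _).mp this
    rcases this with ⟨c, hc⟩
    exact ⟨c + 1, by omega⟩
  intro i
  have hterm2 : ∀ j : Fin n, ((W i j : ℤ) : ZMod 2) = if j = i then 0 else 1 := by
    intro j
    by_cases h : j = i
    · subst h; simp [hdiag]
    · rcases hoff i j (Ne.symm h) with h' | h' <;> rw [h'] <;> simp [h] <;> decide
  have hsum : ((∑ j, W i j : ℤ) : ZMod 2) = ((n - 1 : ℕ) : ZMod 2) := by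
    calc ((∑ j, W i j : ℤ) : ZMod 2) = ∑ j, ((W i j : ℤ) : ZMod 2) := by push_cast; ring
      _ = ∑ j, (if j = i then (0 : ZMod 2) else 1) :=
          Finset.sum_congr rfl fun j _ => hterm2 j
      _ = ((n - 1 : ℕ) : ZMod 2) := by
          have hfe : Finset.univ.filter (fun j => ¬ j = i) = ({i} : Finset (Fin n))ᶜ := by
            ext m; simp
          rw [Finset.sum_ite, Finset.sum_const, Finset.sum_const, smul_zero, zero_add,
            hfe, nsmul_eq_mul, mul_one, Finset.card_compl, Finset.card_singleton]
          simp
  have hne : ¬ ((2 : ℤ) ∣ ∑ j, W i j) := by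
    intro hdvd
    have h0 : ((∑ j, W i j : ℤ) : ZMod 2) = 0 := (ZMod.intCast_zmod_eq_zero_iff_dvd _ _).mpr hdvd
    rw [hsum] at h0
    have : (2 : ℕ) ∣ (n - 1) := (ZMod.natCast_eq_zero_iff _ _).mp h0
    rcases hneven with ⟨c, hc⟩
    omega
  exact Int.odd_iff.mpr (by simpa using hne)

private lemma stmt14_quad (k : ℕ) (hk : Odd k) (r : ℤ) (hr : Odd r) :
    0 ≤ (r - k) * (r - (k + 2)) := by
  rcases le_or_gt r k with h | h
  · exact mul_nonneg_of_nonpos_of_nonpos (by linarith) (by linarith)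
  · have hk2 : (k : ℤ) + 2 ≤ r := by
      by_contra hcon
      have : r = k + 1 := by omega
      subst this
      rcases hk with ⟨m, hm⟩
      rcases hr with ⟨m', hm'⟩
      omega
    exact mul_nonneg (by linarith) (by linarith)

theorem stmt_14 (n : ℕ) (hn : 2 ≤ n) (hns : ¬ IsSquare (n - 1))
    (W : Matrix (Fin n) (Fin n) ℤ)
    (hdiag : ∀ i, W i i = 0)
    (hoff : ∀ i j, i ≠ j → W i j = 1 ∨ W i j = -1)
    (horth : W * W.transpose = ((n : ℤ) - 1) • 1)
    (k : ℕ) (hkodd : Odd k) (hkpos : 0 < k)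
    (hk1 : k ^ 2 ≤ n - 1) (hk2 : n - 1 < (k + 2) ^ 2) :
    ((∑ i, ∑ j, W i j : ℤ) : ℚ) ≤
        (n : ℚ) * ((k : ℚ) ^ 2 + 2 * k + n - 1) / (2 * ((k : ℚ) + 1)) ∧
      (((∑ i, ∑ j, W i j : ℤ) : ℚ) =
          (n : ℚ) * ((k : ℚ) ^ 2 + 2 * k + n - 1) / (2 * ((k : ℚ) + 1)) ↔
        ∀ i, ∑ j, W i j = (k : ℤ) ∨ ∑ j, W i j = (k : ℤ) + 2) := by
  set S : ℤ := ∑ i, ∑ j, W i j with hS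
  have hodd := stmt14_odd n hn W hdiag hoff horth
  have hsq := stmt14_sum_sq n hn W horth
  have hquad : ∀ i, 0 ≤ ((∑ j, W i j) - k) * ((∑ j, W i j) - (k + 2)) :=
    fun i => stmt14_quad k hkodd _ (hodd i)
  have expand : ∑ i, (((∑ j, W i j) - k) * ((∑ j, W i j) - (k + 2)))
      = (∑ i, (∑ j, W i j) ^ 2) - (2 * (k : ℤ) + 2) * (∑ i, ∑ j, W i j)
        + n * ((k : ℤ) * (k + 2)) := by
    have e : ∀ i : Fin n, ((∑ j, W i j) - k) * ((∑ j, W i j) - (k + 2))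
        = (∑ j, W i j) ^ 2 - (2 * (k : ℤ) + 2) * (∑ j, W i j) + (k : ℤ) * (k + 2) :=
      fun i => by ring
    rw [Finset.sum_congr rfl fun i _ => e i, Finset.sum_add_distrib,
      Finset.sum_sub_distrib, ← Finset.mul_sum, Finset.sum_const, Finset.card_univ,
      Fintype.card_fin, nsmul_eq_mul]
  have hQ0 : 0 ≤ ∑ i, (((∑ j, W i j) - k) * ((∑ j, W i j) - (k + 2))) :=
    Finset.sum_nonneg fun i _ => hquad i
  have hkey : (2 * (k : ℤ) + 2) * (∑ i, ∑ j, W i j)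
        + ∑ i, (((∑ j, W i j) - k) * ((∑ j, W i j) - (k + 2)))
      = (n : ℤ) * ((k : ℤ) ^ 2 + 2 * (k : ℤ) + (n : ℤ) - 1) := by
    have h := expand
    rw [hsq] at h
    linear_combination h
  have hpos : (0 : ℚ) < 2 * ((k : ℚ) + 1) := by positivity
  constructor
  · rw [le_div_iff₀ hpos]
    have hineqZ : S * (2 * (k : ℤ) + 2)
        ≤ (n : ℤ) * ((k : ℤ) ^ 2 + 2 * (k : ℤ) + (n : ℤ) - 1) := by
      nlinarith [hkey, hQ0]
    have hcq : ((S * (2 * (k : ℤ) + 2) : ℤ) : ℚ)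
        ≤ (((n : ℤ) * ((k : ℤ) ^ 2 + 2 * (k : ℤ) + (n : ℤ) - 1) : ℤ) : ℚ) := by
      exact_mod_cast hineqZ
    push_cast at hcq
    linarith
  · rw [eq_div_iff hpos.ne']
    constructor
    · intro heq
      have heqZ : (2 * (k : ℤ) + 2) * S
          = (n : ℤ) * ((k : ℤ) ^ 2 + 2 * (k : ℤ) + (n : ℤ) - 1) := by
        have hq : (((2 * (k : ℤ) + 2) * S : ℤ) : ℚ)
            = (((n : ℤ) * ((k : ℤ) ^ 2 + 2 * (k : ℤ) + (n : ℤ) - 1) : ℤ) : ℚ) := by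
          push_cast
          linarith
        exact_mod_cast hq
      have hQzero : ∑ i, (((∑ j, W i j) - k) * ((∑ j, W i j) - (k + 2))) = 0 := by
        linarith [hkey]
      have hall := (Finset.sum_eq_zero_iff_of_nonneg fun i _ => hquad i).mp hQzero
      intro i
      have hi := hall i (Finset.mem_univ i)
      rcases mul_eq_zero.mp hi with h | h
      · left; linarith [sub_eq_zero.mp h]
      · right; linarith [sub_eq_zero.mp h]
    · intro hall
      have hQzero : ∑ i, (((∑ j, W i j) - k) * ((∑ j, W i j) - (k + 2))) = 0 :=
        Finset.sum_eq_zero fun i _ => by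
          rcases hall i with h | h <;> rw [h] <;> ring
      have heqZ : (2 * (k : ℤ) + 2) * S
          = (n : ℤ) * ((k : ℤ) ^ 2 + 2 * (k : ℤ) + (n : ℤ) - 1) := by
        linarith [hkey]
      have hq : (((2 * (k : ℤ) + 2) * S : ℤ) : ℚ)
          = (((n : ℤ) * ((k : ℤ) ^ 2 + 2 * (k : ℤ) + (n : ℤ) - 1) : ℤ) : ℚ) := by
        exact_mod_cast congrArg (fun x : ℤ => (x : ℚ)) heqZ
      push_cast at hq
      linarith
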